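/- For any stochastic (column-stochastic, entrywise nonnegative, columns summing to 1) matrix T and any two strictly positive probability vectors p, q such that Tp and Tq are also strictly positive, the relative entropy contracts: D(Tp||Tq) ≤ D(p||q). -/

import Mathlib

open Finset Matrix

/-- Classical relative entropy (KL divergence) of finite probability vectors. -/
noncomputable def relEnt {n : ℕ} (p q : Fin n → ℝ) : ℝ :=
  ∑ i, p i * Real.log (p i / q i)

private lemma key_tangent {a b A B : ℝ} (ha : 0 < a) (hb : 0 < b) (hA : 0 < A) (hB : 0 < B) :
    a * Real.log (A / B) + (a - b * (A / B)) ≤ a * Real.log (a / b) := by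
  have hx : (0:ℝ) < a * B / (b * A) := by positivity
  have h1 : 1 - b * A / (a * B) ≤ Real.log (a * B / (b * A)) := by
    have h := Real.log_le_sub_one_of_pos (show (0:ℝ) < (a * B / (b * A))⁻¹ by positivity)
    rw [Real.log_inv] at h
    have : (a * B / (b * A))⁻¹ = b * A / (a * B) := by field_simp
    rw [this] at h; linarith
  have h2 : Real.log (a / b) = Real.log (a * B / (b * A)) + Real.log (A / B) := by
    rw [← Real.log_mul (ne_of_gt hx) (by positivity)]
    congr 1; field_simp
  have h5 : a * (1 - b * A / (a * B)) ≤ a * Real.log (a * B / (b * A)) :=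
    mul_le_mul_of_nonneg_left h1 ha.le
  have h4 : a * (b * A / (a * B)) = b * (A / B) := by field_simp
  rw [mul_sub, mul_one, h4] at h5
  rw [h2, mul_add]; linarith

/-- Data-processing inequality: relative entropy contracts under stochastic maps. -/
theorem relEnt_contracts_under_stochastic {n : ℕ} (T : Matrix (Fin n) (Fin n) ℝ)
    (hTpos : ∀ i j, 0 ≤ T i j) (hTcol : ∀ j, ∑ i, T i j = 1)
    (p q : Fin n → ℝ)
    (hp : ∀ i, 0 < p i) (hq : ∀ i, 0 < q i)
    (hps : ∑ i, p i = 1) (hqs : ∑ i, q i = 1)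
    (hTp : ∀ i, 0 < (T.mulVec p) i) (hTq : ∀ i, 0 < (T.mulVec q) i) :
    relEnt (T.mulVec p) (T.mulVec q) ≤ relEnt p q := by
  have row : ∀ i, (T.mulVec p) i * Real.log ((T.mulVec p) i / (T.mulVec q) i)
      ≤ ∑ j, T i j * (p j * Real.log (p j / q j)) := by
    intro i
    set A := (T.mulVec p) i with hA
    set B := (T.mulVec q) i with hB
    have hA0 := hTp i; have hB0 := hTq i
    rw [← hA] at hA0; rw [← hB] at hB0
    have hsum : ∑ j, (T i j * p j * Real.log (A / B) + (T i j * p j - T i j * q j * (A / B)))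
        = A * Real.log (A / B) := by
      rw [Finset.sum_add_distrib, Finset.sum_sub_distrib, ← Finset.sum_mul, ← Finset.sum_mul]
      have hAeq : ∑ j, T i j * p j = A := by rw [hA]; rfl
      have hBeq : ∑ j, T i j * q j = B := by rw [hB]; rfl
      rw [hAeq, hBeq]
      field_simp
      ring
    rw [← hsum]
    apply Finset.sum_le_sum
    intro j _
    rcases eq_or_lt_of_le (hTpos i j) with h0 | h0
    · simp [← h0]
    · have hkey := key_tangent (mul_pos h0 (hp j)) (mul_pos h0 (hq j)) hA0 hB0
      have hrat : T i j * p j / (T i j * q j) = p j / q j :=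
        mul_div_mul_left _ _ (ne_of_gt h0)
      rw [hrat] at hkey
      calc T i j * p j * Real.log (A / B) + (T i j * p j - T i j * q j * (A / B))
          ≤ T i j * p j * Real.log (p j / q j) := hkey
        _ = T i j * (p j * Real.log (p j / q j)) := by ring
  calc relEnt (T.mulVec p) (T.mulVec q)
      ≤ ∑ i, ∑ j, T i j * (p j * Real.log (p j / q j)) := Finset.sum_le_sum fun i _ => row i
    _ = ∑ j, (∑ i, T i j) * (p j * Real.log (p j / q j)) := by
        rw [Finset.sum_comm]; simp [Finset.sum_mul]
    _ = relEnt p q := by simp [hTcol, relEnt]
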